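/- arXiv:2101.12341 — 7 statements merged into one kernel-verified Lean document; each statement's English description precedes it below -/
import Mathlib

section
/- In a Wheeler graph, for any pattern P over the edge-label alphabet, the set of vertices reachable by directed paths labelled P forms a (possibly empty) interval in the Wheeler order. -/
/-- A Wheeler graph: a directed multigraph with vertex set `V`, edge set `E`,
edge labels in a totally ordered alphabet `A`, whose (total) Wheeler order on
the vertices satisfies: vertices of in-degree 0 precede those of positive
in-degree, and for edges `e`, `e'` with labels `a`, `a'`:
if `a ≺ a'` then `tgt e < tgt e'`; if `a = a'` and `src e < src e'` then
`tgt e ≤ tgt e'`. -/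
structure WheelerGraph (V E A : Type) [LinearOrder V] [LinearOrder A] where
  src : E → V
  tgt : E → V
  lab : E → A
  indeg0_first : ∀ v w : V, (¬ ∃ e, tgt e = v) → (∃ e, tgt e = w) → v < w
  mono_lt : ∀ e e' : E, lab e < lab e' → tgt e < tgt e'
  mono_eq : ∀ e e' : E, lab e = lab e' → src e < src e' → tgt e ≤ tgt e'

/-- `G.Reach P v` : vertex `v` is reachable by a directed path labelled `P`
(every vertex is reachable by the empty path; backward-search semantics:
`v` is reachable by `a :: Q` iff `v` is the target of an `a`-labelled edge
whose source is reachable by `Q`). -/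
inductive WheelerGraph.Reach {V E A : Type} [LinearOrder V] [LinearOrder A]
    (G : WheelerGraph V E A) : List A → V → Prop
  | nil (v : V) : WheelerGraph.Reach G [] v
  | cons (e : E) {Q : List A} : WheelerGraph.Reach G Q (G.src e) →
      WheelerGraph.Reach G (G.lab e :: Q) (G.tgt e)

/-- `u'` immediately precedes `u` in the Wheeler order. -/
def ImmPred {V : Type} [LinearOrder V] (u' u : V) : Prop :=
  u' < u ∧ ¬ ∃ w, u' < w ∧ w < u

lemma reach_cons_inv {V E A : Type} [LinearOrder V] [LinearOrder A]
    (G : WheelerGraph V E A) {a : A} {Q : List A} {v : V}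
    (h : G.Reach (a :: Q) v) :
    ∃ e, G.lab e = a ∧ G.tgt e = v ∧ G.Reach Q (G.src e) := by
  cases h with
  | cons e hs => exact ⟨e, rfl, rfl, hs⟩

/-- In a Wheeler graph, the set of vertices reachable by directed
paths labelled `P` forms a (possibly empty) interval in the Wheeler order. -/
theorem wheeler_reach_interval {V E A : Type} [LinearOrder V] [LinearOrder A]
    (G : WheelerGraph V E A) (P : List A) :
    ∀ v₁ v₂ v₃ : V, G.Reach P v₁ → G.Reach P v₃ → v₁ ≤ v₂ → v₂ ≤ v₃ →
      G.Reach P v₂ := by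

  induction P with
  | nil => intro v₁ v₂ v₃ _ _ _ _; exact WheelerGraph.Reach.nil v₂
  | cons a Q ih =>
    intro v₁ v₂ v₃ h₁ h₃ h12 h23
    rcases h12.lt_or_eq with h12 | rfl; swap
    · exact h₁
    rcases h23.lt_or_eq with h23 | rfl; swap
    · exact h₃
    obtain ⟨e₁, hl₁, ht₁, hs₁⟩ := reach_cons_inv G h₁
    obtain ⟨e₃, hl₃, ht₃, hs₃⟩ := reach_cons_inv G h₃
    by_cases hin : ∃ e, G.tgt e = v₂
    · obtain ⟨e, he⟩ := hin
      have hlab : G.lab e = a := by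
        rcases lt_trichotomy (G.lab e) a with h | h | h
        · have := G.mono_lt e e₁ (by rw [hl₁]; exact h)
          rw [he, ht₁] at this
          exact absurd this (not_lt.2 h12.le)
        · exact h
        · have := G.mono_lt e₃ e (by rw [hl₃]; exact h)
          rw [he, ht₃] at this
          exact absurd this (not_lt.2 h23.le)
      have hs : G.src e₁ ≤ G.src e := by
        by_contra hc
        push_neg at hc
        have := G.mono_eq e e₁ (hlab.trans hl₁.symm) hc
        rw [he, ht₁] at this
        exact absurd this (not_le.2 h12)
      have hs' : G.src e ≤ G.src e₃ := by
        by_contra hc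
        push_neg at hc
        have := G.mono_eq e₃ e (hl₃.trans hlab.symm) hc
        rw [he, ht₃] at this
        exact absurd this (not_le.2 h23)
      have hr := ih (G.src e₁) (G.src e) (G.src e₃) hs₁ hs₃ hs hs'
      have := WheelerGraph.Reach.cons (G := G) e hr
      rw [he, hlab] at this
      exact this
    · have := G.indeg0_first v₂ v₁ hin ⟨e₁, ht₁⟩
      exact absurd this (not_lt.2 h12.le)
end

section
/- In a Wheeler graph, for any pattern P of length m and any i ≤ m, if [s_{i+1}, e_{i+1}] is the interval in the Wheeler order of vertices reachable by paths labelled P[i+1..m-1], then every vertex reachable by a path labelled P[i..m-1] is the target of an edge labelled P[i] whose source lies in [s_{i+1}, e_{i+1}], and conversely every target of such an edge is reachable by a path labelled P[i..m-1]. -/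
/-- if `[s, t]` is the interval of vertices reachable by paths
labelled `P[i+1..m-1]`, then the vertices reachable by paths labelled
`P[i..m-1]` are exactly the targets of edges labelled `P[i]` whose sources
lie in `[s, t]`. -/
theorem wheeler_backward_step {V E A : Type} [LinearOrder V] [LinearOrder A]
    (G : WheelerGraph V E A) (P : List A) (i : ℕ) (hi : i < P.length)
    (s t : V)
    (hint : ∀ v, G.Reach (P.drop (i + 1)) v ↔ v ∈ Set.Icc s t) :
    ∀ v, G.Reach (P.drop i) v ↔
      ∃ e : E, G.lab e = P.get ⟨i, hi⟩ ∧ G.src e ∈ Set.Icc s t ∧ G.tgt e = v := by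
  intro v
  have hd : P.drop i = P.get ⟨i, hi⟩ :: P.drop (i + 1) := List.drop_eq_getElem_cons hi
  rw [hd]
  generalize P.get ⟨i, hi⟩ = a
  constructor
  · intro h
    cases h with
    | cons e he => exact ⟨e, rfl, (hint _).1 he, rfl⟩
  · rintro ⟨e, hl, hs, rfl⟩
    rw [← hl]
    exact WheelerGraph.Reach.cons e ((hint _).2 hs)
end

section
/- In a Wheeler graph, if u' immediately precedes u in the Wheeler order, u has a unique outgoing edge (u,v), u' has a unique outgoing edge (u',v'), these two edges carry the same label, and v and v' each have in-degree exactly 1, then v' immediately precedes v in the Wheeler order (in particular v' < v and no vertex lies strictly between them). -/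
/-- if `u'` immediately precedes `u`, `u` and `u'` have unique
outgoing edges `e = (u,v)` and `e' = (u',v')` with the same label, and `v`
and `v'` each have in-degree exactly 1, then `v'` immediately precedes `v`
in the Wheeler order. -/
theorem wheeler_pred_propagates {V E A : Type} [LinearOrder V] [LinearOrder A]
    (G : WheelerGraph V E A) (u u' : V) (e e' : E)
    (hpred : ImmPred u' u)
    (hsrce : G.src e = u) (huniq : ∀ f : E, G.src f = u → f = e)
    (hsrce' : G.src e' = u') (huniq' : ∀ f : E, G.src f = u' → f = e')
    (hlab : G.lab e = G.lab e')
    (hin : ∀ f : E, G.tgt f = G.tgt e → f = e)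
    (hin' : ∀ f : E, G.tgt f = G.tgt e' → f = e') :
    ImmPred (G.tgt e') (G.tgt e) := by
  obtain ⟨hlt, hno⟩ := hpred
  have hle : G.tgt e' ≤ G.tgt e := G.mono_eq e' e hlab.symm (by rw [hsrce, hsrce']; exact hlt)
  have hne : G.tgt e' ≠ G.tgt e := by
    intro h
    have : e' = e := hin e' h
    subst this
    rw [hsrce] at hsrce'
    exact absurd hsrce' (ne_of_gt hlt)
  refine ⟨lt_of_le_of_ne hle hne, ?_⟩
  rintro ⟨w, hw1, hw2⟩
  by_cases hex : ∃ f, G.tgt f = w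
  · obtain ⟨f, hf⟩ := hex
    rcases lt_trichotomy (G.lab f) (G.lab e) with hl | hl | hl
    · have := G.mono_lt f e' (hlab ▸ hl)
      rw [hf] at this; exact absurd hw1 (not_lt.2 this.le)
    · rcases lt_trichotomy (G.src f) u' with hs | hs | hs
      · have := G.mono_eq f e' (hl.trans hlab) (hsrce' ▸ hs)
        rw [hf] at this; exact absurd hw1 (not_lt.2 this)
      · have := huniq' f hs
        subst this; rw [hf] at hw1; exact lt_irrefl _ hw1
      · rcases lt_trichotomy (G.src f) u with hs2 | hs2 | hs2
        · exact hno ⟨G.src f, hs, hs2⟩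
        · have := huniq f hs2
          subst this; rw [hf] at hw2; exact lt_irrefl _ hw2
        · have := G.mono_eq e f hl.symm (hsrce ▸ hs2)
          rw [hf] at this; exact absurd hw2 (not_lt.2 this)
    · have := G.mono_lt e f hl
      rw [hf] at this; exact absurd hw2 (not_lt.2 this.le)
  · have := G.indeg0_first w (G.tgt e') hex ⟨e', rfl⟩
    exact absurd hw1 (not_lt.2 this.le)
end

section
/- In a Wheeler graph whose vertex set is totally ordered by the Wheeler order, for each label a the targets of a-labelled edges form an interval: if v₁ < v₂ < v₃, and v₁ and v₃ each have an incoming edge labelled a, then every incoming edge of v₂ is labelled a (provided v₂ has positive in-degree). -/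
/-- for each label `a` the targets of `a`-labelled edges form an
interval: if `v₁ < v₂ < v₃`, `v₁` and `v₃` each have incoming `a`-edges, then
every incoming edge of `v₂` is labelled `a`. -/
theorem wheeler_label_targets_interval {V E A : Type} [LinearOrder V]
    [LinearOrder A] (G : WheelerGraph V E A) (a : A) (v₁ v₂ v₃ : V)
    (h12 : v₁ < v₂) (h23 : v₂ < v₃) (e₁ e₃ : E)
    (he₁ : G.tgt e₁ = v₁ ∧ G.lab e₁ = a) (he₃ : G.tgt e₃ = v₃ ∧ G.lab e₃ = a) :
    ∀ e : E, G.tgt e = v₂ → G.lab e = a := by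
  intro e he
  rcases lt_trichotomy (G.lab e) a with h | h | h
  · have := G.mono_lt e e₁ (by rw [he₁.2]; exact h)
    rw [he, he₁.1] at this
    exact absurd this (not_lt.2 h12.le)
  · exact h
  · have := G.mono_lt e₃ e (by rw [he₃.2]; exact h)
    rw [he, he₃.1] at this
    exact absurd this (not_lt.2 h23.le)
end

section
/- Let G be a Wheeler graph with a vertex identifier assignment id: V → {0,...,n-1} and a decomposition D of G into edge-disjoint directed paths whose internal vertices have in- and out-degree exactly 1, such that whenever (u,v) is an edge and neither u nor v is an endpoint of a path in D, id(v) = id(u) + 1. Suppose vertex u (with identifier i) is immediately preceded in the Wheeler order by u' (with identifier i'), u and u' each have a unique outgoing edge, (u,v) and (u',v') respectively, both edges carry the same label, v and v' each have in-degree exactly 1, and none of u, u', v, v' is an endpoint of a path in D. Then v (with identifier i+1) is immediately preceded in the Wheeler order by v' (with identifier i'+1); i.e., φ(i+1) = φ(i) + 1, where φ maps a vertex's identifier to the identifier of its immediate predecessor in the Wheeler order. -/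
/-- with identifiers assigned so that `id (tgt e) = id (src e) + 1`
whenever neither endpoint of the edge `e` is an endpoint of a path of the
decomposition `D` (whose endpoints form the set `Endp`): if `u'` immediately
precedes `u`, `u` and `u'` have unique outgoing edges `e = (u,v)`,
`e' = (u',v')` with the same label, `v` and `v'` have in-degree exactly 1,
and none of `u, u', v, v'` is an endpoint of a path in `D`, then `v'`
immediately precedes `v`, `id v = id u + 1` and `id v' = id u' + 1`
(i.e. `φ (i + 1) = φ i + 1`). -/
theorem wheeler_phi_step {V E A : Type} [LinearOrder V] [LinearOrder A]
    (G : WheelerGraph V E A) (n : ℕ) (ident : V → ℕ)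
    (hinj : Function.Injective ident) (hrange : ∀ v : V, ident v < n)
    (Endp : Set V)
    (hid : ∀ e : E, G.src e ∉ Endp → G.tgt e ∉ Endp →
      ident (G.tgt e) = ident (G.src e) + 1)
    (u u' : V) (e e' : E)
    (hpred : ImmPred u' u)
    (hsrce : G.src e = u) (huniq : ∀ f : E, G.src f = u → f = e)
    (hsrce' : G.src e' = u') (huniq' : ∀ f : E, G.src f = u' → f = e')
    (hlab : G.lab e = G.lab e')
    (hin : ∀ f : E, G.tgt f = G.tgt e → f = e)
    (hin' : ∀ f : E, G.tgt f = G.tgt e' → f = e')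
    (hu : u ∉ Endp) (hu' : u' ∉ Endp)
    (hv : G.tgt e ∉ Endp) (hv' : G.tgt e' ∉ Endp) :
    ImmPred (G.tgt e') (G.tgt e) ∧
      ident (G.tgt e) = ident u + 1 ∧ ident (G.tgt e') = ident u' + 1 := by
  obtain ⟨hlt, hnone⟩ := hpred
  have hne : e' ≠ e := by
    intro h; subst h
    exact absurd (hsrce'.symm.trans hsrce) (ne_of_lt hlt)
  have hle : G.tgt e' ≤ G.tgt e := by
    apply G.mono_eq e' e hlab.symm
    rw [hsrce, hsrce']; exact hlt
  have htlt : G.tgt e' < G.tgt e := by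
    rcases lt_or_eq_of_le hle with h | h
    · exact h
    · exact absurd (hin e' h) hne
  refine ⟨⟨htlt, ?_⟩, hid e (hsrce.symm ▸ hu) hv ▸ by rw [hsrce], hid e' (hsrce'.symm ▸ hu') hv' ▸ by rw [hsrce']⟩
  rintro ⟨w, hw1, hw2⟩
  -- w has positive in-degree
  have hf : ∃ f, G.tgt f = w := by
    by_contra h
    exact absurd (G.indeg0_first w (G.tgt e') h ⟨e', rfl⟩) (not_lt.2 hw1.le)
  obtain ⟨f, hf⟩ := hf
  -- lab f = lab e
  have hlabf : G.lab f = G.lab e := by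
    rcases lt_trichotomy (G.lab f) (G.lab e) with h | h | h
    · have := G.mono_lt f e' (hlab ▸ h)
      exact absurd (hf ▸ this) (not_lt.2 hw1.le)
    · exact h
    · have := G.mono_lt e f h
      exact absurd (hf ▸ this) (not_lt.2 hw2.le)
  -- src f strictly between u' and u
  apply hnone
  refine ⟨G.src f, ?_, ?_⟩
  · rcases lt_trichotomy u' (G.src f) with h | h | h
    · exact h
    · have := huniq' f h.symm
      subst this
      exact absurd hf (ne_of_lt hw1)
    · have := G.mono_eq f e' (hlab ▸ hlabf) (hsrce' ▸ h)
      exact absurd (hf ▸ this) (not_le.2 hw1)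
  · rcases lt_trichotomy (G.src f) u with h | h | h
    · exact h
    · have := huniq f h
      subst this
      exact absurd hf (ne_of_gt hw2)
    · have := G.mono_eq e f hlabf.symm (hsrce ▸ h)
      exact absurd (hf ▸ this) (not_le.2 hw2)
end

section
/- In a Wheeler graph, if the last vertex u of the interval [s_{i+1}, e_{i+1}] for P[i+1..m-1] has at least one outgoing edge labelled P[i], then the last vertex of the interval for P[i..m-1] is the maximal target among u's outgoing edges labelled P[i]. -/
/-- if the last vertex `u` of the interval for `P[i+1..m-1]` has
an outgoing edge labelled `P[i]`, then the last vertex of the interval for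
`P[i..m-1]` is the maximal target among `u`'s outgoing `P[i]`-edges. -/
theorem wheeler_toehold_case1 {V E A : Type} [LinearOrder V] [LinearOrder A]
    (G : WheelerGraph V E A) (P : List A) (i : ℕ) (hi : i < P.length)
    (u : V)
    (hu : G.Reach (P.drop (i + 1)) u)
    (hlast : ∀ w : V, G.Reach (P.drop (i + 1)) w → w ≤ u)
    (e : E) (hsrc : G.src e = u) (hlab : G.lab e = P.get ⟨i, hi⟩)
    (hmax : ∀ f : E, G.src f = u → G.lab f = P.get ⟨i, hi⟩ →
      G.tgt f ≤ G.tgt e) :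
    G.Reach (P.drop i) (G.tgt e) ∧
      ∀ v : V, G.Reach (P.drop i) v → v ≤ G.tgt e := by
  have hdrop : P.drop i = P.get ⟨i, hi⟩ :: P.drop (i + 1) :=
    List.drop_eq_getElem_cons hi
  generalize hgen : P.get ⟨i, hi⟩ = a at hdrop hlab hmax
  constructor
  · rw [hdrop, ← hlab]
    exact WheelerGraph.Reach.cons e (hsrc ▸ hu)
  · intro v hv
    rw [hdrop] at hv
    cases hv with
    | cons f hf =>
      have hsrcf : G.src f ≤ u := hlast _ hf
      rcases lt_or_eq_of_le hsrcf with h | h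
      · exact G.mono_eq f e hlab.symm (by rwa [hsrc])
      · exact hmax f h rfl
end

section
/- In a Wheeler graph equipped with a Burrows-Wheeler Transform B (a permutation of the edge labels such that edges with smaller source in the Wheeler order have their labels earlier in B, and labels of a common source appear in order of their targets), the labels in B appear in non-decreasing order of their edges' targets: if label of edge e appears before label of edge e' in B, then target(e) ≤ target(e') whenever the two labels are equal. -/
/-- in a BWT `B` of a Wheeler graph (given by the position
`B e` of each edge's label, with edges of smaller source earlier and labels
of a common source in order of targets), equally-labelled edges appear in
non-decreasing order of their targets. -/
theorem wheeler_bwt_targets_monotone {V E A : Type} [LinearOrder V]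
    [LinearOrder A] (G : WheelerGraph V E A) (B : E → ℕ)
    (hBinj : Function.Injective B)
    (hBsrc : ∀ e e' : E, G.src e < G.src e' → B e < B e')
    (hBtgt : ∀ e e' : E, G.src e = G.src e' → G.tgt e < G.tgt e' → B e < B e')
    (e e' : E) (hlab : G.lab e = G.lab e') (hB : B e < B e') :
    G.tgt e ≤ G.tgt e' := by
  rcases lt_trichotomy (G.src e) (G.src e') with h|h|h
  · exact G.mono_eq e e' hlab h
  · by_contra hc
    exact absurd (hBtgt e' e h.symm (lt_of_not_ge hc)) (by omega)
  · exact absurd (hBsrc e' e h) (by omega)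
end
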